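/- arXiv:2210.01387 — 7 statements merged into one kernel-verified Lean document; each statement's English description precedes it below -/
import Mathlib

section
/- For any intervals X, Y, Z ∈ I(ℝ): if [0,0] ⪯ X ⊖_gH Y, then [0,0] ⊖_gH Z ⪯ (X ⊖_gH Y) ⊖_gH Z. -/
/-- A compact real interval `[lo, hi]` with `lo ≤ hi`. -/
structure IInt where
  lo : ℝ
  hi : ℝ
  isLe : lo ≤ hi

namespace IInt

/-- Dominance order on intervals: `[a,b] ⪯ [c,d]` iff `a ≤ c` and `b ≤ d`. -/
def ile (X Y : IInt) : Prop := X.lo ≤ Y.lo ∧ X.hi ≤ Y.hi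

/-- Interval addition `⊕`. -/
def add (X Y : IInt) : IInt := ⟨X.lo + Y.lo, X.hi + Y.hi, add_le_add X.isLe Y.isLe⟩

/-- gH-difference `⊖_gH`. -/
def gH (X Y : IInt) : IInt :=
  ⟨min (X.lo - Y.lo) (X.hi - Y.hi), max (X.lo - Y.lo) (X.hi - Y.hi), min_le_max⟩

/-- Scalar multiplication `λ ⊙ [a,b]`：`[λa, λb]` for `λ ≥ 0` and `[λb, λa]` for `λ < 0`. -/
def smul (l : ℝ) (X : IInt) : IInt :=
  ⟨min (l * X.lo) (l * X.hi), max (l * X.lo) (l * X.hi), min_le_max⟩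

/-- Inclusion of intervals: `[a,b] ⊆ [c,d]` iff `c ≤ a` and `b ≤ d`. -/
def subset (X Y : IInt) : Prop := Y.lo ≤ X.lo ∧ X.hi ≤ Y.hi

/-- Norm on `I(ℝ)`: `‖[a,b]‖ = max |a| |b|`. -/
def inorm (X : IInt) : ℝ := max |X.lo| |X.hi|

/-- The degenerate interval `[r, r]`. -/
def ofReal (r : ℝ) : IInt := ⟨r, r, le_refl r⟩

/-- Width of an interval. -/
def width (X : IInt) : ℝ := X.hi - X.lo

end IInt

/-- The product `Ĝ⊤ ⊙ d` of an interval vector and a real vector. -/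
def iprod {n : ℕ} (G : Fin n → IInt) (d : EuclideanSpace ℝ (Fin n)) : IInt :=
  ⟨∑ i, min (d i * (G i).lo) (d i * (G i).hi),
   ∑ i, max (d i * (G i).lo) (d i * (G i).hi),
   Finset.sum_le_sum fun _ _ => min_le_max⟩

/-- `(Ĝ, c)` is a gH-weak subgradient of `Φ` at `u` relative to `Y`. -/
def IsWeakSubgrad {n : ℕ} (Y : Set (EuclideanSpace ℝ (Fin n)))
    (Φ : EuclideanSpace ℝ (Fin n) → IInt) (u : EuclideanSpace ℝ (Fin n))
    (G : Fin n → IInt) (c : ℝ) : Prop :=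
  0 ≤ c ∧ ∀ y ∈ Y,
    IInt.ile (IInt.gH (iprod G (y - u)) (IInt.ofReal (c * ‖y - u‖))) (IInt.gH (Φ y) (Φ u))

/-- `(Ĥ, c')` belongs to the augmented normal cone to `Y` at `u`. -/
def InAugNormalCone {n : ℕ} (Y : Set (EuclideanSpace ℝ (Fin n)))
    (u : EuclideanSpace ℝ (Fin n)) (H : Fin n → IInt) (c' : ℝ) : Prop :=
  0 ≤ c' ∧ ∀ y ∈ Y,
    IInt.ile (IInt.gH (iprod H (y - u)) (IInt.ofReal (c' * ‖y - u‖))) (IInt.ofReal 0)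

/-- If `[0,0] ⪯ X ⊖_gH Y`, then `[0,0] ⊖_gH Z ⪯ (X ⊖_gH Y) ⊖_gH Z`. -/
theorem stmt_4 (X Y Z : IInt) (h : IInt.ile (IInt.ofReal 0) (IInt.gH X Y)) :
    IInt.ile (IInt.gH (IInt.ofReal 0) Z) (IInt.gH (IInt.gH X Y) Z) := by
  obtain ⟨h1, h2⟩ := h
  simp only [IInt.ile, IInt.gH, IInt.ofReal] at *
  constructor
  · apply le_min
    · exact le_trans (min_le_left _ _) (by linarith)
    · exact le_trans (min_le_right _ _) (by linarith)
  · rcases le_total ((0:ℝ) - Z.lo) (0 - Z.hi) with hc | hc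
    · exact le_trans (max_le hc le_rfl) (le_trans (by linarith) (le_max_right _ _))
    · exact le_trans (max_le le_rfl hc) (le_trans (by linarith) (le_max_left _ _))
end

section
/- Let Y ⊆ ℝⁿ be nonempty, Φ : Y → I(ℝ) an interval-valued function, and u ∈ Y. If (Ĝ₁, c₁) and (Ĝ₂, c₂) are gH-weak subgradients of Φ at u and β ∈ [0,1], then (β⊙Ĝ₁ ⊕ (1−β)⊙Ĝ₂, β·c₁ + (1−β)·c₂) is also a gH-weak subgradient of Φ at u; hence the gH-weak subdifferential ∂ʷΦ(u) is a convex set. -/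
lemma key_combo (β t a b c d : ℝ) (hβ0 : 0 ≤ β) (hβ1 : β ≤ 1) (hab : a ≤ b) (hcd : c ≤ d) :
    min (t * (min (β*a) (β*b) + min ((1-β)*c) ((1-β)*d)))
        (t * (max (β*a) (β*b) + max ((1-β)*c) ((1-β)*d)))
      = β * min (t*a) (t*b) + (1-β) * min (t*c) (t*d) ∧
    max (t * (min (β*a) (β*b) + min ((1-β)*c) ((1-β)*d)))
        (t * (max (β*a) (β*b) + max ((1-β)*c) ((1-β)*d)))
      = β * max (t*a) (t*b) + (1-β) * max (t*c) (t*d) := by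
  have h1 : (0:ℝ) ≤ 1 - β := by linarith
  have e1 : min (β*a) (β*b) = β*a := min_eq_left (by nlinarith)
  have e2 : max (β*a) (β*b) = β*b := max_eq_right (by nlinarith)
  have e3 : min ((1-β)*c) ((1-β)*d) = (1-β)*c := min_eq_left (by nlinarith)
  have e4 : max ((1-β)*c) ((1-β)*d) = (1-β)*d := max_eq_right (by nlinarith)
  rw [e1, e2, e3, e4]
  rcases le_or_gt 0 t with ht | ht
  · have f1 : t*a ≤ t*b := by nlinarith
    have f2 : t*c ≤ t*d := by nlinarith
    have g1 : t * (β*a + (1-β)*c) ≤ t * (β*b + (1-β)*d) :=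
      mul_le_mul_of_nonneg_left (by nlinarith) ht
    rw [min_eq_left g1, max_eq_right g1, min_eq_left f1, min_eq_left f2,
        max_eq_right f1, max_eq_right f2]
    constructor <;> ring
  · have f1 : t*b ≤ t*a := by nlinarith
    have f2 : t*d ≤ t*c := by nlinarith
    have g1 : t * (β*b + (1-β)*d) ≤ t * (β*a + (1-β)*c) := by nlinarith
    rw [min_eq_right g1, max_eq_left g1, min_eq_right f1, min_eq_right f2,
        max_eq_left f1, max_eq_left f2]
    constructor <;> ring

/-- a convex combination of two gH-weak subgradients of `Φ` at `u` is again a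
gH-weak subgradient of `Φ` at `u`; hence `∂ʷΦ(u)` is convex. -/
theorem stmt_10 {n : ℕ} (Y : Set (EuclideanSpace ℝ (Fin n))) (hY : Y.Nonempty)
    (Φ : EuclideanSpace ℝ (Fin n) → IInt) (u : EuclideanSpace ℝ (Fin n)) (hu : u ∈ Y)
    (G₁ G₂ : Fin n → IInt) (c₁ c₂ β : ℝ)
    (h₁ : IsWeakSubgrad Y Φ u G₁ c₁) (h₂ : IsWeakSubgrad Y Φ u G₂ c₂)
    (hβ0 : 0 ≤ β) (hβ1 : β ≤ 1) :
    IsWeakSubgrad Y Φ u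
      (fun i => IInt.add (IInt.smul β (G₁ i)) (IInt.smul (1 - β) (G₂ i)))
      (β * c₁ + (1 - β) * c₂) := by
  obtain ⟨hc₁, H1⟩ := h₁
  obtain ⟨hc₂, H2⟩ := h₂
  have h1β : (0:ℝ) ≤ 1 - β := by linarith
  refine ⟨add_nonneg (mul_nonneg hβ0 hc₁) (mul_nonneg h1β hc₂), fun y hy => ?_⟩
  obtain ⟨hl1, hr1⟩ := H1 y hy
  obtain ⟨hl2, hr2⟩ := H2 y hy
  set d : EuclideanSpace ℝ (Fin n) := y - u with hd
  set Gc : Fin n → IInt := fun i => IInt.add (IInt.smul β (G₁ i)) (IInt.smul (1 - β) (G₂ i))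
    with hGc
  have Esum : ∀ i : Fin n,
      (min (d i * (Gc i).lo) (d i * (Gc i).hi)
        = β * min (d i * (G₁ i).lo) (d i * (G₁ i).hi)
          + (1-β) * min (d i * (G₂ i).lo) (d i * (G₂ i).hi)) ∧
      (max (d i * (Gc i).lo) (d i * (Gc i).hi)
        = β * max (d i * (G₁ i).lo) (d i * (G₁ i).hi)
          + (1-β) * max (d i * (G₂ i).lo) (d i * (G₂ i).hi)) := fun i =>
    key_combo β (d i) (G₁ i).lo (G₁ i).hi (G₂ i).lo (G₂ i).hi hβ0 hβ1
      (G₁ i).isLe (G₂ i).isLe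
  have SLo : (iprod Gc d).lo = β * (iprod G₁ d).lo + (1-β) * (iprod G₂ d).lo := by
    show (∑ i, min (d i * (Gc i).lo) (d i * (Gc i).hi)) = _
    rw [Finset.sum_congr rfl (fun i _ => (Esum i).1), Finset.sum_add_distrib,
      ← Finset.mul_sum, ← Finset.mul_sum]
    rfl
  have SHi : (iprod Gc d).hi = β * (iprod G₁ d).hi + (1-β) * (iprod G₂ d).hi := by
    show (∑ i, max (d i * (Gc i).lo) (d i * (Gc i).hi)) = _
    rw [Finset.sum_congr rfl (fun i _ => (Esum i).2), Finset.sum_add_distrib,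
      ← Finset.mul_sum, ← Finset.mul_sum]
    rfl
  have le1 : (iprod G₁ d).lo ≤ (iprod G₁ d).hi := (iprod G₁ d).isLe
  have le2 : (iprod G₂ d).lo ≤ (iprod G₂ d).hi := (iprod G₂ d).isLe
  have lec : (iprod Gc d).lo ≤ (iprod Gc d).hi := (iprod Gc d).isLe
  set r₁ := c₁ * ‖d‖ with hr₁
  set r₂ := c₂ * ‖d‖ with hr₂
  set L := min ((Φ y).lo - (Φ u).lo) ((Φ y).hi - (Φ u).hi) with hL
  set Hh := max ((Φ y).lo - (Φ u).lo) ((Φ y).hi - (Φ u).hi) with hH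
  have hl1' : (iprod G₁ d).lo - r₁ ≤ L := by
    have := hl1
    simp only [IInt.gH, IInt.ofReal, IInt.ile] at this
    have e : min ((iprod G₁ d).lo - r₁) ((iprod G₁ d).hi - r₁)
        = (iprod G₁ d).lo - r₁ := min_eq_left (by linarith)
    rw [e] at this
    exact this
  have hl2' : (iprod G₂ d).lo - r₂ ≤ L := by
    have := hl2
    simp only [IInt.gH, IInt.ofReal, IInt.ile] at this
    have e : min ((iprod G₂ d).lo - r₂) ((iprod G₂ d).hi - r₂)
        = (iprod G₂ d).lo - r₂ := min_eq_left (by linarith)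
    rw [e] at this
    exact this
  have hr1' : (iprod G₁ d).hi - r₁ ≤ Hh := by
    have := hr1
    simp only [IInt.gH, IInt.ofReal, IInt.ile] at this
    exact le_trans (le_max_right _ _) this
  have hr2' : (iprod G₂ d).hi - r₂ ≤ Hh := by
    have := hr2
    simp only [IInt.gH, IInt.ofReal, IInt.ile] at this
    exact le_trans (le_max_right _ _) this
  have m1 : β * ((iprod G₁ d).lo - r₁) ≤ β * L := mul_le_mul_of_nonneg_left hl1' hβ0
  have m2 : (1-β) * ((iprod G₂ d).lo - r₂) ≤ (1-β) * L := mul_le_mul_of_nonneg_left hl2' h1β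
  have m3 : β * ((iprod G₁ d).hi - r₁) ≤ β * Hh := mul_le_mul_of_nonneg_left hr1' hβ0
  have m4 : (1-β) * ((iprod G₂ d).hi - r₂) ≤ (1-β) * Hh := mul_le_mul_of_nonneg_left hr2' h1β
  have hrr : (β * c₁ + (1 - β) * c₂) * ‖d‖ = β * r₁ + (1-β) * r₂ := by
    rw [hr₁, hr₂]; ring
  constructor
  · show min ((iprod Gc d).lo - (β * c₁ + (1 - β) * c₂) * ‖d‖)
        ((iprod Gc d).hi - (β * c₁ + (1 - β) * c₂) * ‖d‖) ≤ L
    refine le_trans (min_le_left _ _) ?_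
    rw [hrr, SLo]
    nlinarith [m1, m2]
  · show max ((iprod Gc d).lo - (β * c₁ + (1 - β) * c₂) * ‖d‖)
        ((iprod Gc d).hi - (β * c₁ + (1 - β) * c₂) * ‖d‖) ≤ Hh
    have key : (iprod Gc d).hi - (β * c₁ + (1 - β) * c₂) * ‖d‖ ≤ Hh := by
      rw [hrr, SHi]; nlinarith [m3, m4]
    exact max_le (by linarith) key
end

section
/- Let Y ⊆ ℝⁿ be nonempty, Ψ : Y → I(ℝ) an interval-valued function, and u ∈ Y. If {(Ĝₖ, cₖ)} is a sequence of gH-weak subgradients of Ψ at u such that cₖ → c in ℝ and, for each coordinate i, the lower and upper endpoints of the i-th component of Ĝₖ converge to the corresponding endpoints of an interval vector Ĝ ∈ I(ℝ)ⁿ, then (Ĝ, c) is a gH-weak subgradient of Ψ at u; hence ∂ʷΨ(u) is a closed set. -/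
/-- a limit of gH-weak subgradients of `Ψ` at `u` is again a gH-weak
subgradient of `Ψ` at `u`; hence `∂ʷΨ(u)` is closed. -/
theorem stmt_11 {n : ℕ} (Y : Set (EuclideanSpace ℝ (Fin n))) (hY : Y.Nonempty)
    (Ψ : EuclideanSpace ℝ (Fin n) → IInt) (u : EuclideanSpace ℝ (Fin n)) (hu : u ∈ Y)
    (Gk : ℕ → Fin n → IInt) (ck : ℕ → ℝ) (G : Fin n → IInt) (c : ℝ)
    (hsub : ∀ k, IsWeakSubgrad Y Ψ u (Gk k) (ck k))
    (hc : Filter.Tendsto ck Filter.atTop (nhds c))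
    (hlo : ∀ i, Filter.Tendsto (fun k => (Gk k i).lo) Filter.atTop (nhds (G i).lo))
    (hhi : ∀ i, Filter.Tendsto (fun k => (Gk k i).hi) Filter.atTop (nhds (G i).hi)) :
    IsWeakSubgrad Y Ψ u G c := by
  refine ⟨le_of_tendsto_of_tendsto' tendsto_const_nhds hc (fun k => (hsub k).1), ?_⟩
  intro y hy
  have hA : Filter.Tendsto
      (fun k => ∑ i, min ((y - u) i * (Gk k i).lo) ((y - u) i * (Gk k i).hi))
      Filter.atTop (nhds (∑ i, min ((y - u) i * (G i).lo) ((y - u) i * (G i).hi))) := by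
    refine tendsto_finset_sum _ fun i _ => ?_
    exact (Filter.Tendsto.const_mul _ (hlo i)).min (Filter.Tendsto.const_mul _ (hhi i))
  have hB : Filter.Tendsto
      (fun k => ∑ i, max ((y - u) i * (Gk k i).lo) ((y - u) i * (Gk k i).hi))
      Filter.atTop (nhds (∑ i, max ((y - u) i * (G i).lo) ((y - u) i * (G i).hi))) := by
    refine tendsto_finset_sum _ fun i _ => ?_
    exact (Filter.Tendsto.const_mul _ (hlo i)).max (Filter.Tendsto.const_mul _ (hhi i))
  have hC : Filter.Tendsto (fun k => ck k * ‖y - u‖) Filter.atTop (nhds (c * ‖y - u‖)) :=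
    hc.mul_const _
  have hk := fun k => (hsub k).2 y hy
  simp only [IInt.ile, IInt.gH, IInt.ofReal, iprod] at hk ⊢
  constructor
  · refine le_of_tendsto ((hA.sub hC).min (hB.sub hC)) ?_
    exact Filter.Eventually.of_forall fun k => (hk k).1
  · refine le_of_tendsto ((hA.sub hC).max (hB.sub hC)) ?_
    exact Filter.Eventually.of_forall fun k => (hk k).2
end

section
/- Let Y ⊆ ℝⁿ be nonempty, Φ : Y → I(ℝ) an interval-valued function, and u ∈ Y. If (Ĝ, c) is a gH-weak subgradient of Φ at u, then Φ is gH-lower Lipschitz at u with Lipschitz constant L = ‖Ĝ‖_{I(ℝ)ⁿ} + c, i.e., [−L‖y−u‖, −L‖y−u‖] ⪯ Φ(y) ⊖_gH Φ(u) for all y ∈ Y. -/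
lemma coord_abs_le_norm {n : ℕ} (d : EuclideanSpace ℝ (Fin n)) (i : Fin n) :
    |d i| ≤ ‖d‖ := by
  rw [EuclideanSpace.norm_eq]
  have h1 : |d i| = Real.sqrt (‖d i‖ ^ 2) := by
    rw [Real.sqrt_sq_eq_abs]; simp [abs_abs]
  rw [h1]
  apply Real.sqrt_le_sqrt
  exact Finset.single_le_sum (f := fun j => ‖d j‖ ^ 2)
    (fun j _ => sq_nonneg _) (Finset.mem_univ i)

lemma key_bound {n : ℕ} (G : Fin n → IInt) (d : EuclideanSpace ℝ (Fin n)) :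
    -((∑ i, IInt.inorm (G i)) * ‖d‖) ≤ (iprod G d).lo := by
  have hterm : ∀ i : Fin n,
      -(IInt.inorm (G i) * ‖d‖) ≤ min (d i * (G i).lo) (d i * (G i).hi) := by
    intro i
    have hdi := coord_abs_le_norm d i
    have hlo : |d i * (G i).lo| ≤ ‖d‖ * IInt.inorm (G i) := by
      rw [abs_mul]
      exact mul_le_mul hdi (le_max_left _ _) (abs_nonneg _) (norm_nonneg d)
    have hhi : |d i * (G i).hi| ≤ ‖d‖ * IInt.inorm (G i) := by
      rw [abs_mul]
      exact mul_le_mul hdi (le_max_right _ _) (abs_nonneg _) (norm_nonneg d)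
    have h1 := neg_abs_le (d i * (G i).lo)
    have h2 := neg_abs_le (d i * (G i).hi)
    apply le_min <;> nlinarith
  calc -((∑ i, IInt.inorm (G i)) * ‖d‖)
      = ∑ i, -(IInt.inorm (G i) * ‖d‖) := by
        rw [Finset.sum_mul, ← Finset.sum_neg_distrib]
    _ ≤ ∑ i, min (d i * (G i).lo) (d i * (G i).hi) :=
        Finset.sum_le_sum fun i _ => hterm i
    _ = (iprod G d).lo := rfl

/-- a gH-weak subgradient `(Ĝ, c)` of `Φ` at `u` makes `Φ` gH-lower Lipschitz
at `u` with constant `L = ‖Ĝ‖ + c`. -/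
theorem stmt_13 {n : ℕ} (Y : Set (EuclideanSpace ℝ (Fin n))) (hY : Y.Nonempty)
    (Φ : EuclideanSpace ℝ (Fin n) → IInt) (u : EuclideanSpace ℝ (Fin n)) (hu : u ∈ Y)
    (G : Fin n → IInt) (c : ℝ) (h : IsWeakSubgrad Y Φ u G c) :
    ∀ y ∈ Y, IInt.ile (IInt.ofReal (-(((∑ i, IInt.inorm (G i)) + c) * ‖y - u‖)))
      (IInt.gH (Φ y) (Φ u)) := by
  intro y hy
  obtain ⟨hc, hsub⟩ := h
  have H := hsub y hy
  obtain ⟨H1, H2⟩ := H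
  set A := iprod G (y - u) with hA
  set r := c * ‖y - u‖ with hr
  have hAle : A.lo ≤ A.hi := A.isLe
  have hlo_eq : (IInt.gH A (IInt.ofReal r)).lo = A.lo - r := by
    simp only [IInt.gH, IInt.ofReal]
    exact min_eq_left (by linarith)
  have hhi_ge : A.lo - r ≤ (IInt.gH A (IInt.ofReal r)).hi := by
    simp only [IInt.gH, IInt.ofReal]
    exact le_max_left _ _
  have hkey := key_bound G (y - u)
  have hstart : -(((∑ i, IInt.inorm (G i)) + c) * ‖y - u‖) ≤ A.lo - r := by
    have : -(((∑ i, IInt.inorm (G i)) + c) * ‖y - u‖)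
        = -((∑ i, IInt.inorm (G i)) * ‖y - u‖) - r := by ring
    rw [this]
    linarith
  constructor
  · show (IInt.ofReal _).lo ≤ _
    calc (IInt.ofReal (-(((∑ i, IInt.inorm (G i)) + c) * ‖y - u‖))).lo
        = -(((∑ i, IInt.inorm (G i)) + c) * ‖y - u‖) := rfl
      _ ≤ A.lo - r := hstart
      _ = (IInt.gH A (IInt.ofReal r)).lo := hlo_eq.symm
      _ ≤ _ := H1
  · show (IInt.ofReal _).hi ≤ _
    calc (IInt.ofReal (-(((∑ i, IInt.inorm (G i)) + c) * ‖y - u‖))).hi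
        = -(((∑ i, IInt.inorm (G i)) + c) * ‖y - u‖) := rfl
      _ ≤ A.lo - r := hstart
      _ ≤ (IInt.gH A (IInt.ofReal r)).hi := hhi_ge
      _ ≤ _ := H2
end

section
/- Let Y ⊆ ℝⁿ be nonempty and Φ₁, Φ₂ : Y → I(ℝ) be interval-valued functions that are gH-weak subdifferentiable at u ∈ Y. Suppose u is a weak efficient point of the interval-valued function y ↦ Φ₂(y) ⊖_gH Φ₁(y), and Φ₁(u) = Φ₂(u). Then ∂ʷΦ₁(u) ⊆ ∂ʷΦ₂(u), i.e., every gH-weak subgradient of Φ₁ at u is a gH-weak subgradient of Φ₂ at u. -/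
/-- if `Φ₁, Φ₂` are gH-weak subdifferentiable at `u`, `u` is a weak efficient
point of `Φ₂ ⊖_gH Φ₁`, and `Φ₁(u) = Φ₂(u)`, then `∂ʷΦ₁(u) ⊆ ∂ʷΦ₂(u)`. -/
theorem stmt_16 {n : ℕ} (Y : Set (EuclideanSpace ℝ (Fin n))) (hY : Y.Nonempty)
    (Φ₁ Φ₂ : EuclideanSpace ℝ (Fin n) → IInt) (u : EuclideanSpace ℝ (Fin n)) (hu : u ∈ Y)
    (h1 : ∃ G c, IsWeakSubgrad Y Φ₁ u G c) (h2 : ∃ G c, IsWeakSubgrad Y Φ₂ u G c)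
    (hweak : ∀ y ∈ Y, IInt.ile (IInt.gH (Φ₂ u) (Φ₁ u)) (IInt.gH (Φ₂ y) (Φ₁ y)))
    (heq : Φ₁ u = Φ₂ u) :
    ∀ G c, IsWeakSubgrad Y Φ₁ u G c → IsWeakSubgrad Y Φ₂ u G c := by
  rintro G c ⟨hc, hG⟩
  refine ⟨hc, fun y hy => ?_⟩
  obtain ⟨h₁, h₂⟩ := hG y hy
  obtain ⟨w₁, w₂⟩ := hweak y hy
  simp only [IInt.gH, IInt.ile, heq, sub_self, min_self, max_self] at *
  have hl : (Φ₁ y).lo ≤ (Φ₂ y).lo := by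
    have := le_min_iff.mp w₁; linarith [this.1]
  have hh : (Φ₁ y).hi ≤ (Φ₂ y).hi := by
    have := le_min_iff.mp w₁; linarith [this.2]
  constructor
  · exact h₁.trans (min_le_min (by linarith) (by linarith))
  · exact h₂.trans (max_le_max (by linarith) (by linarith))
end

section
/- Let Y ⊆ ℝⁿ be nonempty and Φ₁, Φ₂ : Y → I(ℝ) be interval-valued functions that are gH-weak subdifferentiable at u ∈ Y. Suppose u is a weak efficient point of the interval-valued function y ↦ Φ₂(y) ⊖_gH Φ₁(y), and suppose either w(Φ₁(y)) ≥ w(Φ₂(y)) for all y ∈ Y or w(Φ₁(y)) ≤ w(Φ₂(y)) for all y ∈ Y, where w([a,b]) = b − a denotes the width of an interval. Then ∂ʷΦ₁(u) ⊆ ∂ʷΦ₂(u). -/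
/-- if `Φ₁, Φ₂` are gH-weak subdifferentiable at `u`, `u` is a weak efficient
point of `Φ₂ ⊖_gH Φ₁`, and the widths are uniformly comparable on `Y`, then
`∂ʷΦ₁(u) ⊆ ∂ʷΦ₂(u)`. -/
theorem stmt_17 {n : ℕ} (Y : Set (EuclideanSpace ℝ (Fin n))) (hY : Y.Nonempty)
    (Φ₁ Φ₂ : EuclideanSpace ℝ (Fin n) → IInt) (u : EuclideanSpace ℝ (Fin n)) (hu : u ∈ Y)
    (h1 : ∃ G c, IsWeakSubgrad Y Φ₁ u G c) (h2 : ∃ G c, IsWeakSubgrad Y Φ₂ u G c)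
    (hweak : ∀ y ∈ Y, IInt.ile (IInt.gH (Φ₂ u) (Φ₁ u)) (IInt.gH (Φ₂ y) (Φ₁ y)))
    (hw : (∀ y ∈ Y, IInt.width (Φ₂ y) ≤ IInt.width (Φ₁ y)) ∨
          (∀ y ∈ Y, IInt.width (Φ₁ y) ≤ IInt.width (Φ₂ y))) :
    ∀ G c, IsWeakSubgrad Y Φ₁ u G c → IsWeakSubgrad Y Φ₂ u G c := by
  -- Key step: gH(Φ₁ y, Φ₁ u) ⪯ gH(Φ₂ y, Φ₂ u) for all y ∈ Y.
  have key : ∀ y ∈ Y, IInt.ile (IInt.gH (Φ₁ y) (Φ₁ u)) (IInt.gH (Φ₂ y) (Φ₂ u)) := by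
    intro y hy
    obtain ⟨hmin, hmax⟩ := hweak y hy
    simp only [IInt.gH, IInt.ile, IInt.width] at hmin hmax ⊢
    set al := (Φ₁ y).lo; set ah := (Φ₁ y).hi
    set bl := (Φ₁ u).lo; set bh := (Φ₁ u).hi
    set Al := (Φ₂ y).lo; set Ah := (Φ₂ y).hi
    set Bl := (Φ₂ u).lo; set Bh := (Φ₂ u).hi
    rcases hw with hcase | hcase
    · have hA : Ah - Al ≤ ah - al := hcase y hy
      have hB : Bh - Bl ≤ bh - bl := hcase u hu
      rw [min_eq_right (by linarith : Ah - ah ≤ Al - al),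
          min_eq_right (by linarith : Bh - bh ≤ Bl - bl)] at hmin
      rw [max_eq_left (by linarith : Ah - ah ≤ Al - al),
          max_eq_left (by linarith : Bh - bh ≤ Bl - bl)] at hmax
      exact ⟨min_le_min (by linarith) (by linarith),
             max_le_max (by linarith) (by linarith)⟩
    · have hA : ah - al ≤ Ah - Al := hcase y hy
      have hB : bh - bl ≤ Bh - Bl := hcase u hu
      rw [min_eq_left (by linarith : Al - al ≤ Ah - ah),
          min_eq_left (by linarith : Bl - bl ≤ Bh - bh)] at hmin
      rw [max_eq_right (by linarith : Al - al ≤ Ah - ah),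
          max_eq_right (by linarith : Bl - bl ≤ Bh - bh)] at hmax
      exact ⟨min_le_min (by linarith) (by linarith),
             max_le_max (by linarith) (by linarith)⟩
  rintro G c ⟨hc, hG⟩
  refine ⟨hc, fun y hy => ?_⟩
  obtain ⟨h1l, h1h⟩ := hG y hy
  obtain ⟨h2l, h2h⟩ := key y hy
  exact ⟨le_trans h1l h2l, le_trans h1h h2h⟩
end

section
/- Let Y ⊆ ℝⁿ be nonempty, Ψ : Y → I(ℝ) an interval-valued function, and u ∈ Y. If (0̂, 0) ∈ ∂ʷΨ(u) ⊕ N^c_Y(u) — i.e., there exist (Ĝ, c) ∈ ∂ʷΨ(u) and (Ĥ, c') ∈ N^c_Y(u) with Ĝ ⊕ Ĥ = 0̂ and c + c' = 0, where 0̂ ∈ I(ℝ)ⁿ is the interval vector all of whose components are [0,0] — then u is a weak efficient point of Ψ on Y. -/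
/-- if `(0̂, 0) ∈ ∂ʷΨ(u) ⊕ N^c_Y(u)`, then `u` is a weak efficient point of
`Ψ` on `Y`. -/
theorem stmt_19 {n : ℕ} (Y : Set (EuclideanSpace ℝ (Fin n))) (hY : Y.Nonempty)
    (Ψ : EuclideanSpace ℝ (Fin n) → IInt) (u : EuclideanSpace ℝ (Fin n)) (hu : u ∈ Y)
    (h : ∃ (G H : Fin n → IInt) (c c' : ℝ), IsWeakSubgrad Y Ψ u G c ∧
      InAugNormalCone Y u H c' ∧
      (∀ i, IInt.add (G i) (H i) = IInt.ofReal 0) ∧ c + c' = 0) :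
    ∀ y ∈ Y, IInt.ile (Ψ u) (Ψ y) := by
  obtain ⟨G, H, c, c', ⟨hc, hsub⟩, ⟨hc', hnc⟩, hGH, hcc⟩ := h
  have hc0 : c = 0 := by linarith
  have hc'0 : c' = 0 := by linarith
  have hHlo : ∀ i, (H i).lo = -(G i).lo := fun i => by
    have := congrArg IInt.lo (hGH i); simp [IInt.add, IInt.ofReal] at this; linarith
  have hHhi : ∀ i, (H i).hi = -(G i).hi := fun i => by
    have := congrArg IInt.hi (hGH i); simp [IInt.add, IInt.ofReal] at this; linarith
  have hGeq : ∀ i, (G i).hi = (G i).lo := fun i => by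
    have h1 := (G i).isLe
    have h2 := (H i).isLe
    rw [hHlo i, hHhi i] at h2
    linarith
  intro y hy
  have hs := hsub y hy
  have hn := hnc y hy
  have hiG : iprod G (y - u) = IInt.ofReal (∑ i, (y - u) i * (G i).lo) := by
    simp [iprod, IInt.ofReal, hGeq]
  have hiH : iprod H (y - u) = IInt.ofReal (-(∑ i, (y - u) i * (G i).lo)) := by
    simp only [iprod, IInt.ofReal, hHlo, hHhi, hGeq, min_self, mul_neg, max_self,
      ← Finset.sum_neg_distrib]
  set s := ∑ i, (y - u) i * (G i).lo with hsdef
  rw [hiG, hc0] at hs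
  rw [hiH, hc'0] at hn
  simp [IInt.gH, IInt.ofReal, IInt.ile, le_min_iff, le_max_iff] at hs hn
  obtain ⟨⟨hs1, hs2⟩, _⟩ := hs
  constructor <;> [linarith; linarith]
end
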